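/- Let σ ∈ R\{0}, H_0 and H*_{0,1} as above with −∞ < H*_{0,1} < 0, and H(φ) = H_0(φ) + A(∫_{R²}φ²)². If A = |H*_{0,1}| then inf_{φ∈H^1(R²)} H(φ) = 0 and there exist infinitely many minimizers: if Q ∈ H^1(R²) satisfies ‖Q‖²_{L²} = 1 and H_0(Q) = H*_{0,1}, then for every q ≥ 0 and x_0 ∈ R², the function Q_{q,x_0}(x) := q Q(q^{1/2}(x − x_0)) satisfies ‖Q_{q,x_0}‖²_{L²} = q, H_0(Q_{q,x_0}) = q² H*_{0,1}, and H(Q_{q,x_0}) = 0. -/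

import Mathlib

open MeasureTheory

noncomputable section

/-- Membership in `H^1(ℝ²)` (together with its embedding into `L³`), modelled via
`C^1` regularity and integrability of `|∇φ|²`, `φ²`, and `|φ|³`. -/
def InH1 (φ : EuclideanSpace ℝ (Fin 2) → ℝ) : Prop :=
  ContDiff ℝ 1 φ ∧ Integrable (fun x => ‖fderiv ℝ φ x‖ ^ 2) ∧
    Integrable (fun x => φ x ^ 2) ∧ Integrable (fun x => |φ x| ^ 3)

/-- The Hamiltonian `H₀(φ) = (1/2)∫|∇φ|² + (σ/3)∫φ³` on `ℝ²`. -/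
def H0 (σ : ℝ) (φ : EuclideanSpace ℝ (Fin 2) → ℝ) : ℝ :=
  (1 / 2) * (∫ x, ‖fderiv ℝ φ x‖ ^ 2) + (σ / 3) * ∫ x, φ x ^ 3

/-- The grand-canonical Hamiltonian `H(φ) = H₀(φ) + A(∫φ²)²` on `ℝ²`. -/
def Ham (σ A : ℝ) (φ : EuclideanSpace ℝ (Fin 2) → ℝ) : ℝ :=
  H0 σ φ + A * (∫ x, φ x ^ 2) ^ 2

/-- The set of values `H₀(φ)` over the unit-mass constraint `∫φ² = 1`. -/
def S01 (σ : ℝ) : Set ℝ :=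
  {r : ℝ | ∃ φ, InH1 φ ∧ (∫ x, φ x ^ 2) = 1 ∧ H0 σ φ = r}

abbrev E2' := EuclideanSpace ℝ (Fin 2)

lemma finrank_E2' : Module.finrank ℝ E2' = 2 := by simp

lemma integral_scaleX (f : E2' → ℝ) {c : ℝ} (hc : 0 < c) (x₀ : E2') :
    (∫ x, f (c • (x - x₀))) = (c ^ 2)⁻¹ * ∫ x, f x := by
  have h1 : (∫ x, f (c • (x - x₀))) = ∫ x, (fun y => f (c • y)) (x - x₀) := rfl
  rw [h1, integral_sub_right_eq_self (fun y => f (c • y)) x₀,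
    MeasureTheory.Measure.integral_comp_smul_of_nonneg volume f c (hR := hc.le), finrank_E2',
    smul_eq_mul]

lemma integrable_scaleX {f : E2' → ℝ} (hf : Integrable f) {c : ℝ} (hc : c ≠ 0) (x₀ : E2') :
    Integrable (fun x => f (c • (x - x₀))) := by
  have h1 : Integrable (fun y : E2' => f (c • y)) := hf.comp_smul hc
  exact h1.comp_sub_right x₀

set_option maxHeartbeats 1000000 in
lemma fderiv_scaleX (φ : E2' → ℝ) (hφ : ContDiff ℝ 1 φ) (q c : ℝ) (x₀ x : E2') :
    fderiv ℝ (fun x => q * φ (c • (x - x₀))) x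
      = (q * c) • fderiv ℝ φ (c • (x - x₀)) := by
  have hg : HasFDerivAt (fun x : E2' => c • (x - x₀))
      (c • ContinuousLinearMap.id ℝ E2') x :=
    ((hasFDerivAt_id x).sub_const x₀).const_smul c
  have hφ' : HasFDerivAt φ (fderiv ℝ φ (c • (x - x₀))) (c • (x - x₀)) :=
    (hφ.differentiable one_ne_zero (c • (x - x₀))).hasFDerivAt
  have h2 : HasFDerivAt (fun x : E2' => q * φ (c • (x - x₀)))
      (q • (fderiv ℝ φ (c • (x - x₀))).comp (c • ContinuousLinearMap.id ℝ E2')) x :=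
    (hφ'.comp x hg).const_mul q
  rw [h2.fderiv]
  refine ContinuousLinearMap.ext fun v => ?_
  simp only [ContinuousLinearMap.smul_apply, ContinuousLinearMap.coe_comp',
    Function.comp_apply, ContinuousLinearMap.coe_smul', ContinuousLinearMap.coe_id', id_eq,
    smul_eq_mul]
  rw [Pi.smul_apply, id_eq, (fderiv ℝ φ (c • (x - x₀))).map_smul, smul_eq_mul]
  ring

set_option maxHeartbeats 1000000 in
lemma scale_props (φ : E2' → ℝ) (hφ : InH1 φ) (x₀ : E2') {q c : ℝ} (hq : 0 < q)
    (hc : 0 < c) (hc2 : c ^ 2 = q) :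
    InH1 (fun x => q * φ (c • (x - x₀))) ∧
    (∫ x, (q * φ (c • (x - x₀))) ^ 2) = q * ∫ x, φ x ^ 2 ∧
    (∫ x, ‖fderiv ℝ (fun x => q * φ (c • (x - x₀))) x‖ ^ 2)
      = q ^ 2 * ∫ x, ‖fderiv ℝ φ x‖ ^ 2 ∧
    (∫ x, (q * φ (c • (x - x₀))) ^ 3) = q ^ 2 * ∫ x, φ x ^ 3 := by
  have hcne : c ≠ 0 := hc.ne'
  have hfd : ∀ x : E2', ‖fderiv ℝ (fun x => q * φ (c • (x - x₀))) x‖ ^ 2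
      = (q * c) ^ 2 * ‖fderiv ℝ φ (c • (x - x₀))‖ ^ 2 := by
    intro x
    rw [fderiv_scaleX φ hφ.1 q c x₀ x, norm_smul, Real.norm_eq_abs,
      abs_of_nonneg (by positivity), mul_pow]
  have hgrad : (∫ x, ‖fderiv ℝ (fun x => q * φ (c • (x - x₀))) x‖ ^ 2)
      = q ^ 2 * ∫ x, ‖fderiv ℝ φ x‖ ^ 2 := by
    rw [show (fun x : E2' => ‖fderiv ℝ (fun x => q * φ (c • (x - x₀))) x‖ ^ 2)
        = fun x : E2' => (q * c) ^ 2 * ‖fderiv ℝ φ (c • (x - x₀))‖ ^ 2 from funext hfd]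
    rw [integral_const_mul]
    have h : (∫ x, ‖fderiv ℝ φ (c • (x - x₀))‖ ^ 2) = (c ^ 2)⁻¹ * ∫ x, ‖fderiv ℝ φ x‖ ^ 2 :=
      integral_scaleX (fun y => ‖fderiv ℝ φ y‖ ^ 2) hc x₀
    rw [h, mul_pow, hc2]
    field_simp
  have hsq : (∫ x, (q * φ (c • (x - x₀))) ^ 2) = q * ∫ x, φ x ^ 2 := by
    have h : (∫ x, (q * φ (c • (x - x₀))) ^ 2) = (c ^ 2)⁻¹ * ∫ x, (q * φ x) ^ 2 :=
      integral_scaleX (fun y => (q * φ y) ^ 2) hc x₀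
    rw [h, hc2]
    simp_rw [mul_pow]
    rw [integral_const_mul]
    field_simp
  have hcube : (∫ x, (q * φ (c • (x - x₀))) ^ 3) = q ^ 2 * ∫ x, φ x ^ 3 := by
    have h : (∫ x, (q * φ (c • (x - x₀))) ^ 3) = (c ^ 2)⁻¹ * ∫ x, (q * φ x) ^ 3 :=
      integral_scaleX (fun y => (q * φ y) ^ 3) hc x₀
    rw [h, hc2]
    simp_rw [mul_pow]
    rw [integral_const_mul]
    field_simp
  refine ⟨⟨?_, ?_, ?_, ?_⟩, hsq, hgrad, hcube⟩
  · exact contDiff_const.mul (hφ.1.comp ((contDiff_id.sub contDiff_const).const_smul c))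
  · have base : Integrable (fun x : E2' => ‖fderiv ℝ φ (c • (x - x₀))‖ ^ 2) :=
      integrable_scaleX hφ.2.1 hcne x₀
    exact (base.const_mul ((q * c) ^ 2)).congr
      (Filter.Eventually.of_forall fun x => (hfd x).symm)
  · have base : Integrable (fun x : E2' => φ (c • (x - x₀)) ^ 2) :=
      integrable_scaleX hφ.2.2.1 hcne x₀
    exact (base.const_mul (q ^ 2)).congr (Filter.Eventually.of_forall fun x => by ring)
  · have base : Integrable (fun x : E2' => |φ (c • (x - x₀))| ^ 3) :=
      integrable_scaleX hφ.2.2.2 hcne x₀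
    refine (base.const_mul (q ^ 3)).congr (Filter.Eventually.of_forall fun x => ?_)
    show q ^ 3 * |φ (c • (x - x₀))| ^ 3 = |q * φ (c • (x - x₀))| ^ 3
    rw [abs_mul, mul_pow, abs_of_pos hq]

lemma InH1_zero : InH1 (fun _ => (0 : ℝ)) := by
  refine ⟨contDiff_const, ?_, ?_, ?_⟩
  · have h : (fun x : E2' => ‖fderiv ℝ (fun _ : E2' => (0 : ℝ)) x‖ ^ 2) = fun _ => 0 := by
      funext x; simp
    rw [h]; exact integrable_zero _ _ _
  · have h : (fun x : E2' => ((fun _ : E2' => (0 : ℝ)) x) ^ 2) = fun _ => 0 := by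
      funext x; simp
    rw [h]; exact integrable_zero _ _ _
  · have h : (fun x : E2' => |(fun _ : E2' => (0 : ℝ)) x| ^ 3) = fun _ => 0 := by
      funext x; simp
    rw [h]; exact integrable_zero _ _ _

lemma H0_zero (σ : ℝ) : H0 σ (fun _ => (0 : ℝ)) = 0 := by
  unfold H0
  have h : (fun x : E2' => ‖fderiv ℝ (fun _ : E2' => (0 : ℝ)) x‖ ^ 2) = fun _ => 0 := by
    funext x; simp
  rw [h]
  simp

lemma Ham_zero (σ A : ℝ) : Ham σ A (fun _ => (0 : ℝ)) = 0 := by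
  unfold Ham
  rw [H0_zero]
  simp

lemma ham_nonneg (σ A : ℝ) (hbdd : BddBelow (S01 σ)) (hneg : sInf (S01 σ) < 0)
    (hA : A = |sInf (S01 σ)|) (φ : E2' → ℝ) (hφ : InH1 φ) : 0 ≤ Ham σ A φ := by
  have hA' : A = -sInf (S01 σ) := by rw [hA, abs_of_neg hneg]
  have hm0 : 0 ≤ ∫ x, φ x ^ 2 := integral_nonneg fun x => sq_nonneg _
  rcases hm0.eq_or_lt with hm | hm
  · -- mass zero
    have hsq0 : (fun x => φ x ^ 2) =ᵐ[volume] 0 :=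
      (integral_eq_zero_iff_of_nonneg (fun x => sq_nonneg (φ x)) hφ.2.2.1).mp hm.symm
    have hc0 : (fun x => φ x ^ 3) =ᵐ[volume] 0 := by
      filter_upwards [hsq0] with x hx
      have : φ x = 0 := by
        have := hx
        simpa [pow_eq_zero_iff] using hx
      simp [this]
    have hcube : (∫ x, φ x ^ 3) = 0 := integral_eq_zero_of_ae hc0
    have hgrad : 0 ≤ ∫ x, ‖fderiv ℝ φ x‖ ^ 2 := integral_nonneg fun x => by positivity
    unfold Ham H0
    rw [hcube, ← hm]
    nlinarith
  · -- positive mass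
    set m := ∫ x, φ x ^ 2 with hmdef
    set q := m⁻¹ with hqdef
    have hq : 0 < q := inv_pos.mpr hm
    have hc : 0 < Real.sqrt q := Real.sqrt_pos.mpr hq
    have hc2 : Real.sqrt q ^ 2 = q := Real.sq_sqrt hq.le
    obtain ⟨hψ1, hψ2, hψ3, hψ4⟩ := scale_props φ hφ 0 hq hc hc2
    have hqm : q * m = 1 := inv_mul_cancel₀ hm.ne'
    have hmem : H0 σ (fun x => q * φ (Real.sqrt q • (x - 0))) ∈ S01 σ := by
      refine ⟨_, hψ1, ?_, rfl⟩
      rw [hψ2, ← hmdef, hqm]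
    have hle : sInf (S01 σ) ≤ H0 σ (fun x => q * φ (Real.sqrt q • (x - 0))) :=
      csInf_le hbdd hmem
    have hH0 : H0 σ (fun x => q * φ (Real.sqrt q • (x - 0))) = q ^ 2 * H0 σ φ := by
      unfold H0
      rw [hψ3, hψ4]
      ring
    rw [hH0] at hle
    have hqm2 : q ^ 2 * m ^ 2 = 1 := by rw [← mul_pow, hqm]; norm_num
    have key : q ^ 2 * H0 σ φ * m ^ 2 = H0 σ φ := by
      calc q ^ 2 * H0 σ φ * m ^ 2 = q ^ 2 * m ^ 2 * H0 σ φ := by ring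
        _ = H0 σ φ := by rw [hqm2, one_mul]
    have h1 : sInf (S01 σ) * m ^ 2 ≤ H0 σ φ := by
      calc sInf (S01 σ) * m ^ 2 ≤ q ^ 2 * H0 σ φ * m ^ 2 :=
            mul_le_mul_of_nonneg_right hle (sq_nonneg m)
        _ = H0 σ φ := key
    unfold Ham
    rw [hA', ← hmdef]
    nlinarith

/-- In the critical case `A = |H*_{0,1}|`, the infimum of `H` is `0` and there are
infinitely many minimizers: the rescaled ground states
`Q_{q,x₀}(x) = q Q(q^{1/2}(x - x₀))` all satisfy `∫Q_{q,x₀}² = q`,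
`H₀(Q_{q,x₀}) = q² H*_{0,1}`, and `H(Q_{q,x₀}) = 0`. -/
theorem stmt7 (σ A : ℝ) (hσ : σ ≠ 0)
    (hbdd : BddBelow (S01 σ)) (hneg : sInf (S01 σ) < 0)
    (hA : A = |sInf (S01 σ)|)
    (Q : EuclideanSpace ℝ (Fin 2) → ℝ) (hQ : InH1 Q)
    (hQmass : (∫ x, Q x ^ 2) = 1) (hQmin : H0 σ Q = sInf (S01 σ)) :
    IsLeast {r : ℝ | ∃ φ, InH1 φ ∧ Ham σ A φ = r} 0 ∧
    ∀ q : ℝ, 0 ≤ q → ∀ x₀ : EuclideanSpace ℝ (Fin 2),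
      (∫ x, (q * Q (q ^ ((1 : ℝ) / 2) • (x - x₀))) ^ 2) = q ∧
      H0 σ (fun x => q * Q (q ^ ((1 : ℝ) / 2) • (x - x₀))) = q ^ 2 * sInf (S01 σ) ∧
      Ham σ A (fun x => q * Q (q ^ ((1 : ℝ) / 2) • (x - x₀))) = 0 := by
  have hA' : A = -sInf (S01 σ) := by rw [hA, abs_of_neg hneg]
  constructor
  · constructor
    · exact ⟨fun _ => 0, InH1_zero, Ham_zero σ A⟩
    · rintro r ⟨φ, hφ, rfl⟩
      exact ham_nonneg σ A hbdd hneg hA φ hφ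
  · intro q hq x₀
    rcases hq.eq_or_lt with h0 | hqpos
    · -- q = 0
      subst h0  -- ?
      have hfun : (fun x : E2' => (0 : ℝ) * Q ((0 : ℝ) ^ ((1 : ℝ) / 2) • (x - x₀)))
          = fun _ => (0 : ℝ) := funext fun x => zero_mul _
      refine ⟨?_, ?_, ?_⟩
      · simp
      · rw [hfun, H0_zero]
        ring
      · rw [hfun, Ham_zero]
    · -- q > 0
      set c := q ^ ((1 : ℝ) / 2) with hcdef
      have hc : 0 < c := Real.rpow_pos_of_pos hqpos _
      have hc2 : c ^ 2 = q := by
        rw [hcdef, ← Real.rpow_natCast (q ^ ((1 : ℝ) / 2)) 2, ← Real.rpow_mul hqpos.le]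
        norm_num
      obtain ⟨hψ1, hψ2, hψ3, hψ4⟩ := scale_props Q hQ x₀ hqpos hc hc2
      have hmass : (∫ x, (q * Q (c • (x - x₀))) ^ 2) = q := by rw [hψ2, hQmass, mul_one]
      have hH0 : H0 σ (fun x => q * Q (c • (x - x₀))) = q ^ 2 * sInf (S01 σ) := by
        unfold H0
        rw [hψ3, hψ4, ← hQmin]
        unfold H0
        ring
      refine ⟨hmass, hH0, ?_⟩
      unfold Ham
      rw [hH0, hmass, hA']
      ring
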